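/- Assume ‖ν(z)‖ = 1 for all z ∈ Γ and the Lipschitz hypothesis (Lip) with constant ℓ_ν > 0. Let x₁, x₂, y ∈ Γ with x₁ ≠ y and 2‖x₁ − x₂‖ ≤ ‖x₁ − y‖ (so x₂ ≠ y). Then |(ν(x₁)·ν(y))/‖x₁−y‖³ − (ν(x₂)·ν(y))/‖x₂−y‖³| ≤ ℓ_ν ‖x₁−x₂‖/‖x₁−y‖³ + 48 ‖x₁−x₂‖/‖x₁−y‖⁴. -/

import Mathlib

open scoped RealInnerProductSpace

lemma inv_cube_diff_bound (r₁ r₂ d : ℝ) (h1 : 0 < r₁) (hd : 0 ≤ d)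
    (h2d : 2 * d ≤ r₁) (hlo : r₁ - d ≤ r₂) (hhi : r₂ ≤ r₁ + d) :
    |1 / r₁ ^ 3 - 1 / r₂ ^ 3| ≤ 48 * d / r₁ ^ 4 := by
  have h2 : 0 < r₂ := by nlinarith
  have hhalf : r₁ ≤ 2 * r₂ := by linarith
  have hc1 : r₁ ^ 3 ≤ 8 * r₂ ^ 3 := by nlinarith [pow_le_pow_left₀ h1.le hhalf 3]
  have hfac : (0:ℝ) ≤ r₁ ^ 2 + r₁ * r₂ + r₂ ^ 2 := by positivity
  have hc2 : r₁ ^ 3 - r₂ ^ 3 ≤ d * (r₁ ^ 2 + r₁ * r₂ + r₂ ^ 2) := by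
    nlinarith [mul_le_mul_of_nonneg_right (show r₁ - r₂ ≤ d by linarith) hfac]
  have hc2' : r₂ ^ 3 - r₁ ^ 3 ≤ d * (r₁ ^ 2 + r₁ * r₂ + r₂ ^ 2) := by
    nlinarith [mul_le_mul_of_nonneg_right (show r₂ - r₁ ≤ d by linarith) hfac]
  have hsum : r₁ ^ 2 + r₁ * r₂ + r₂ ^ 2 ≤ 19 / 4 * r₁ ^ 2 := by
    have h32 : r₂ ≤ 3 / 2 * r₁ := by linarith
    nlinarith [mul_le_mul_of_nonneg_left h32 h2.le, mul_le_mul_of_nonneg_left h32 h1.le]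
  rw [abs_le]
  constructor
  · rw [neg_le, ← sub_nonneg, sub_neg_eq_add]
    have key : 48 * d / r₁ ^ 4 + (1 / r₁ ^ 3 - 1 / r₂ ^ 3)
        = (48 * d * r₂ ^ 3 + r₁ * r₂ ^ 3 - r₁ ^ 4) / (r₁ ^ 4 * r₂ ^ 3) := by
      field_simp; ring
    rw [key]
    apply div_nonneg _ (by positivity)
    nlinarith [mul_le_mul_of_nonneg_left hc2 h1.le,
      mul_le_mul_of_nonneg_left hsum (mul_nonneg h1.le hd),
      mul_le_mul_of_nonneg_left hc1 hd,
      mul_nonneg hd (pow_nonneg h2.le 3)]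
  · rw [← sub_nonneg]
    have key : 48 * d / r₁ ^ 4 - (1 / r₁ ^ 3 - 1 / r₂ ^ 3)
        = (48 * d * r₂ ^ 3 - r₁ * r₂ ^ 3 + r₁ ^ 4) / (r₁ ^ 4 * r₂ ^ 3) := by
      field_simp; ring
    rw [key]
    apply div_nonneg _ (by positivity)
    nlinarith [mul_le_mul_of_nonneg_left hc2' h1.le,
      mul_le_mul_of_nonneg_left hsum (mul_nonneg h1.le hd),
      mul_le_mul_of_nonneg_left hc1 hd,
      mul_nonneg hd (pow_nonneg h2.le 3)]

theorem kernel_first_summand_difference_bound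
    (Γ : Set (EuclideanSpace ℝ (Fin 3)))
    (ν : EuclideanSpace ℝ (Fin 3) → EuclideanSpace ℝ (Fin 3))
    (hν : ∀ z ∈ Γ, ‖ν z‖ = 1)
    (ℓ_ν : ℝ) (hℓ : 0 < ℓ_ν)
    (hLip : ∀ x ∈ Γ, ∀ y ∈ Γ, ‖ν x - ν y‖ ≤ ℓ_ν * ‖x - y‖)
    (x₁ x₂ y : EuclideanSpace ℝ (Fin 3))
    (hx₁ : x₁ ∈ Γ) (hx₂ : x₂ ∈ Γ) (hy : y ∈ Γ)
    (hx₁y : x₁ ≠ y)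
    (h : 2 * ‖x₁ - x₂‖ ≤ ‖x₁ - y‖) :
    |⟪ν x₁, ν y⟫ / ‖x₁ - y‖ ^ 3 - ⟪ν x₂, ν y⟫ / ‖x₂ - y‖ ^ 3|
      ≤ ℓ_ν * ‖x₁ - x₂‖ / ‖x₁ - y‖ ^ 3 + 48 * ‖x₁ - x₂‖ / ‖x₁ - y‖ ^ 4 := by
  set A := ⟪ν x₁, ν y⟫ with hA
  set B := ⟪ν x₂, ν y⟫ with hB
  set r₁ := ‖x₁ - y‖ with hr₁
  set r₂ := ‖x₂ - y‖ with hr₂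
  set d := ‖x₁ - x₂‖ with hd
  have hr₁pos : 0 < r₁ := by
    rw [hr₁, norm_pos_iff, sub_ne_zero]; exact hx₁y
  have hdnn : 0 ≤ d := norm_nonneg _
  have hlo : r₁ - d ≤ r₂ := by
    have := norm_sub_le (x₁ - x₂) (x₂ - y)
    have h2 : x₁ - y = (x₁ - x₂) + (x₂ - y) := by abel
    have := norm_add_le (x₁ - x₂) (x₂ - y)
    rw [← h2] at this
    linarith
  have hhi : r₂ ≤ r₁ + d := by
    have h2 : x₂ - y = (x₁ - y) - (x₁ - x₂) := by abel
    have := norm_sub_le (x₁ - y) (x₁ - x₂)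
    rw [← h2] at this
    linarith
  have hAB : |A - B| ≤ ℓ_ν * d := by
    have h1 : A - B = ⟪ν x₁ - ν x₂, ν y⟫ := by rw [inner_sub_left]
    rw [h1]
    calc |⟪ν x₁ - ν x₂, ν y⟫| ≤ ‖ν x₁ - ν x₂‖ * ‖ν y‖ := abs_real_inner_le_norm _ _
    _ = ‖ν x₁ - ν x₂‖ := by rw [hν y hy, mul_one]
    _ ≤ ℓ_ν * d := hLip x₁ hx₁ x₂ hx₂
  have hBle : |B| ≤ 1 := by
    calc |B| ≤ ‖ν x₂‖ * ‖ν y‖ := abs_real_inner_le_norm _ _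
    _ = 1 := by rw [hν _ hx₂, hν _ hy, mul_one]
  have hr₂pos : 0 < r₂ := by nlinarith
  have split : A / r₁ ^ 3 - B / r₂ ^ 3
      = (A - B) / r₁ ^ 3 + B * (1 / r₁ ^ 3 - 1 / r₂ ^ 3) := by
    field_simp; ring
  rw [split]
  calc |(A - B) / r₁ ^ 3 + B * (1 / r₁ ^ 3 - 1 / r₂ ^ 3)|
      ≤ |(A - B) / r₁ ^ 3| + |B * (1 / r₁ ^ 3 - 1 / r₂ ^ 3)| := abs_add_le _ _
    _ = |A - B| / r₁ ^ 3 + |B| * |1 / r₁ ^ 3 - 1 / r₂ ^ 3| := by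
        rw [abs_div, abs_mul, abs_of_pos (by positivity : (0:ℝ) < r₁ ^ 3)]
    _ ≤ (ℓ_ν * d) / r₁ ^ 3 + 1 * (48 * d / r₁ ^ 4) := by
        have hx := inv_cube_diff_bound r₁ r₂ d hr₁pos hdnn h hlo hhi
        gcongr
    _ = ℓ_ν * d / r₁ ^ 3 + 48 * d / r₁ ^ 4 := by ring
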